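/- Suppose M, K, L, ℛ ≥ 0 with K > 0 and M ≤ Kℛ, ℛ>0. Let κ(r) = L for r < ℛ and κ(r) = −K for r ≥ ℛ, and define α = (M/2)∫₀^∞ exp((1/2)∫₀^x (M + κ(y)y) dy) dx. Then α ≤ (π^{1/2} e^{1/2} K^{−1/2} + 2ℛ/max(4, Lℛ² + 2Mℛ)) · M · exp(Mℛ/2 + Lℛ²/4). -/

import Mathlib

open MeasureTheory

lemma kappa_intble (M K L R : ℝ) (κ : ℝ → ℝ)
    (hκ : ∀ r, κ r = if r < R then L else -K) (a b : ℝ) :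
    IntervalIntegrable (fun y => M + κ y * y) volume a b := by
  have hfeq : ∀ y, M + κ y * y =
      (M + L * y) - Set.indicator (Set.Ici R) (fun y => (L + K) * y) y := by
    intro y
    by_cases h : y < R
    · simp [hκ, h, Set.indicator_of_notMem (Set.notMem_Ici.mpr h)]
    · push_neg at h
      rw [hκ, if_neg (not_lt.mpr h), Set.indicator_of_mem (Set.mem_Ici.mpr h)]
      ring
  rw [intervalIntegrable_iff]
  have h1 : IntegrableOn (fun y => M + L * y) (Set.uIoc a b) volume :=
    (((by fun_prop : Continuous fun y : ℝ => M + L * y)).intervalIntegrable a b).def'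
  have h2 : IntegrableOn (fun y => (L + K) * y) (Set.uIoc a b) volume :=
    (((by fun_prop : Continuous fun y : ℝ => (L + K) * y)).intervalIntegrable a b).def'
  have h3 : IntegrableOn (Set.indicator (Set.Ici R) (fun y => (L + K) * y))
      (Set.uIoc a b) volume := h2.indicator measurableSet_Ici
  exact IntegrableOn.congr_fun (h1.sub h3) (fun y _ => (hfeq y).symm) measurableSet_uIoc

lemma F_small (M K L R : ℝ) (κ : ℝ → ℝ)
    (hκ : ∀ r, κ r = if r < R then L else -K) (x : ℝ) (hx : 0 < x) (hxR : x ≤ R) :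
    (∫ y in (0:ℝ)..x, M + κ y * y) = M * x + L * x ^ 2 / 2 := by
  have hcongr : (∫ y in (0:ℝ)..x, M + κ y * y) = ∫ y in (0:ℝ)..x, M + L * y := by
    apply intervalIntegral.integral_congr_ae
    have hne : ∀ᵐ y : ℝ, y ≠ R := by
      have : (volume : Measure ℝ) {R} = 0 := measure_singleton R
      simpa [ae_iff] using this
    filter_upwards [hne] with y hy hmem
    rw [Set.uIoc_of_le hx.le] at hmem
    have : y < R := lt_of_le_of_ne (hmem.2.trans hxR) hy
    rw [hκ, if_pos this]
  rw [hcongr, intervalIntegral.integral_add (intervalIntegrable_const)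
      (((by fun_prop : Continuous fun y : ℝ => L * y)).intervalIntegrable 0 x),
    intervalIntegral.integral_const, intervalIntegral.integral_const_mul, integral_id,
    smul_eq_mul]
  ring

lemma F_big (M K L R : ℝ) (κ : ℝ → ℝ)
    (hκ : ∀ r, κ r = if r < R then L else -K) (hR : 0 < R) (x : ℝ) (hx : R < x) :
    (∫ y in (0:ℝ)..x, M + κ y * y)
      = M * x + (L + K) * R ^ 2 / 2 - K * x ^ 2 / 2 := by
  have hsplit := intervalIntegral.integral_add_adjacent_intervals
    (kappa_intble M K L R κ hκ 0 R) (kappa_intble M K L R κ hκ R x)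
  rw [← hsplit, F_small M K L R κ hκ R hR le_rfl]
  have h2 : (∫ y in R..x, M + κ y * y) = ∫ y in R..x, M + (-K) * y := by
    apply intervalIntegral.integral_congr
    intro y hy
    rw [Set.uIcc_of_le hx.le] at hy
    simp only [hκ, not_lt.mpr hy.1, if_false]
  rw [h2, intervalIntegral.integral_add (intervalIntegrable_const)
      (((by fun_prop : Continuous fun y : ℝ => (-K) * y)).intervalIntegrable R x),
    intervalIntegral.integral_const, intervalIntegral.integral_const_mul, integral_id,
    smul_eq_mul]
  ring

theorem alpha_bound_small_M (M K L R : ℝ) (hM : 0 ≤ M) (hL : 0 ≤ L)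
    (hK : 0 < K) (hR : 0 < R) (hMK : M ≤ K * R)
    (κ : ℝ → ℝ) (hκ : ∀ r, κ r = if r < R then L else -K)
    (α : ℝ)
    (hα : α = (M / 2) * ∫ x in Set.Ioi (0:ℝ),
        Real.exp ((1/2) * ∫ y in (0:ℝ)..x, M + κ y * y)) :
    α ≤ (Real.pi ^ ((1:ℝ)/2) * Real.exp ((1:ℝ)/2) * K ^ (-(1:ℝ)/2) +
          2 * R / max 4 (L * R ^ 2 + 2 * M * R)) * M *
        Real.exp (M * R / 2 + L * R ^ 2 / 4) := by
  set E : ℝ := M * R / 2 + L * R ^ 2 / 4 with hEdef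
  have hE0 : 0 ≤ E := by positivity
  set g : ℝ → ℝ := fun x =>
    if x ≤ R then Real.exp (E / R * x) else Real.exp (E - K / 4 * (x - R) ^ 2) with hgdef
  -- dominating function integrable on pieces
  have hg1 : IntegrableOn g (Set.Ioc 0 R) volume := by
    refine IntegrableOn.congr_fun
      (((by fun_prop : Continuous fun x : ℝ => Real.exp (E / R * x))).integrableOn_Ioc)
      (fun x hx => ?_) measurableSet_Ioc
    simp only [hgdef, if_pos hx.2]
  have hgauss : Integrable (fun x : ℝ => Real.exp (-(K / 4) * (x - R) ^ 2)) volume := by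
    have := integrable_exp_neg_mul_sq (b := K / 4) (by positivity)
    exact this.comp_sub_right R
  have hg2 : IntegrableOn g (Set.Ioi R) volume := by
    refine IntegrableOn.congr_fun ((hgauss.const_mul (Real.exp E)).integrableOn)
      (fun x hx => ?_) measurableSet_Ioi
    simp only [hgdef, if_neg (not_le.mpr (Set.mem_Ioi.mp hx))]
    rw [← Real.exp_add]
    ring_nf
  have hunion : Set.Ioc (0:ℝ) R ∪ Set.Ioi R = Set.Ioi 0 := Set.Ioc_union_Ioi_eq_Ioi hR.le
  have hgint : IntegrableOn g (Set.Ioi 0) volume := by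
    rw [← hunion]
    exact hg1.union hg2
  -- pointwise domination
  have hdom : ∀ x ∈ Set.Ioi (0:ℝ),
      Real.exp ((1/2) * ∫ y in (0:ℝ)..x, M + κ y * y) ≤ g x := by
    intro x hx
    simp only [Set.mem_Ioi] at hx
    by_cases hxR : x ≤ R
    · rw [F_small M K L R κ hκ x hx hxR, hgdef]
      simp only [if_pos hxR]
      apply Real.exp_le_exp.mpr
      have hE' : E / R = M / 2 + L * R / 4 := by rw [hEdef]; field_simp
      rw [hE']
      nlinarith [mul_nonneg (mul_nonneg hL hx.le) (sub_nonneg.mpr hxR)]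
    · push_neg at hxR
      rw [F_big M K L R κ hκ hR x hxR, hgdef]
      simp only [if_neg (not_le.mpr hxR)]
      apply Real.exp_le_exp.mpr
      rw [hEdef]
      nlinarith [sq_nonneg (x - R), mul_nonneg (sub_nonneg.mpr hMK) (sub_nonneg.mpr hxR.le)]
  -- main comparison
  have hmain : (∫ x in Set.Ioi (0:ℝ),
      Real.exp ((1/2) * ∫ y in (0:ℝ)..x, M + κ y * y)) ≤ ∫ x in Set.Ioi (0:ℝ), g x := by
    apply integral_mono_of_nonneg
    · filter_upwards with x using (Real.exp_pos _).le
    · exact hgint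
    · exact (ae_restrict_iff' measurableSet_Ioi).mpr
        (Filter.Eventually.of_forall (fun x hx => hdom x hx))
  -- split the g-integral
  have hsplit : (∫ x in Set.Ioi (0:ℝ), g x)
      = (∫ x in Set.Ioc (0:ℝ) R, g x) + ∫ x in Set.Ioi R, g x := by
    rw [← hunion]
    exact setIntegral_union (Set.Ioc_disjoint_Ioi le_rfl) measurableSet_Ioi hg1 hg2
  -- bound on first piece
  have hI1 : (∫ x in Set.Ioc (0:ℝ) R, g x)
      ≤ 4 * R * Real.exp E / max 4 (L * R ^ 2 + 2 * M * R) := by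
    have hEq4 : L * R ^ 2 + 2 * M * R = 4 * E := by rw [hEdef]; ring
    have hcongr : (∫ x in Set.Ioc (0:ℝ) R, g x)
        = ∫ x in Set.Ioc (0:ℝ) R, Real.exp (E / R * x) := by
      apply setIntegral_congr_fun measurableSet_Ioc
      intro x hx
      simp only [hgdef, if_pos hx.2]
    rw [hcongr, hEq4]
    by_cases hE1 : E ≤ 1
    · rw [max_eq_left (by linarith)]
      have hle : (∫ x in Set.Ioc (0:ℝ) R, Real.exp (E / R * x))
          ≤ ∫ _ in Set.Ioc (0:ℝ) R, Real.exp E := by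
        refine setIntegral_mono_on
          (IntegrableOn.congr_fun hg1 (fun x hx => by simp [hgdef, if_pos hx.2])
            measurableSet_Ioc)
          (integrableOn_const measure_Ioc_lt_top.ne) measurableSet_Ioc
          (fun x hx => ?_)
        apply Real.exp_le_exp.mpr
        rw [div_mul_eq_mul_div, div_le_iff₀ hR]
        nlinarith [hx.1.le, hx.2]
      calc (∫ x in Set.Ioc (0:ℝ) R, Real.exp (E / R * x))
          ≤ ∫ _ in Set.Ioc (0:ℝ) R, Real.exp E := hle
        _ = R * Real.exp E := by
            rw [setIntegral_const, Real.volume_real_Ioc_of_le hR.le, smul_eq_mul]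
            ring
        _ ≤ 4 * R * Real.exp E / 4 := le_of_eq (by ring)
    · push_neg at hE1
      rw [max_eq_right (by linarith)]
      have hc : E / R ≠ 0 := by positivity
      have hval : (∫ x in Set.Ioc (0:ℝ) R, Real.exp (E / R * x))
          = (Real.exp E - 1) / (E / R) := by
        rw [← intervalIntegral.integral_of_le hR.le]
        have : ∀ x : ℝ, Real.exp (E / R * x) = Real.exp (x * (E / R)) := by
          intro x; rw [mul_comm]
        simp_rw [this]
        rw [intervalIntegral.integral_comp_mul_right (fun y => Real.exp y) hc]
        rw [integral_exp, smul_eq_mul]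
        have hRE : R * (E / R) = E := by field_simp
        rw [zero_mul, Real.exp_zero, hRE, inv_mul_eq_div]
      rw [hval]
      rw [div_le_div_iff₀ (by positivity) (by positivity)]
      have h1 : Real.exp E - 1 ≤ Real.exp E := by linarith
      calc (Real.exp E - 1) * (4 * E) ≤ Real.exp E * (4 * E) := by nlinarith [Real.exp_pos E]
        _ = 4 * R * Real.exp E * (E / R) := by field_simp
  -- bound on second piece
  have hI2 : (∫ x in Set.Ioi R, g x)
      ≤ Real.exp E * (2 * Real.sqrt Real.pi / Real.sqrt K) := by
    have hcongr : (∫ x in Set.Ioi R, g x)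
        = ∫ x in Set.Ioi R, Real.exp E * Real.exp (-(K / 4) * (x - R) ^ 2) := by
      apply setIntegral_congr_fun measurableSet_Ioi
      intro x hx
      simp only [hgdef, if_neg (not_le.mpr (Set.mem_Ioi.mp hx))]
      rw [← Real.exp_add]; ring_nf
    rw [hcongr, integral_const_mul]
    apply mul_le_mul_of_nonneg_left _ (Real.exp_pos E).le
    have hle : (∫ x in Set.Ioi R, Real.exp (-(K / 4) * (x - R) ^ 2))
        ≤ ∫ x : ℝ, Real.exp (-(K / 4) * (x - R) ^ 2) := by
      apply setIntegral_le_integral hgauss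
      filter_upwards with x using (Real.exp_pos _).le
    refine hle.trans ?_
    rw [integral_sub_right_eq_self (fun x => Real.exp (-(K / 4) * x ^ 2)) R,
      integral_gaussian]
    apply le_of_eq
    rw [show Real.pi / (K / 4) = 2 ^ 2 * (Real.pi / K) by ring,
      Real.sqrt_mul (by positivity) (Real.pi / K),
      Real.sqrt_sq (by norm_num : (0:ℝ) ≤ 2),
      Real.sqrt_div Real.pi_pos.le, mul_div_assoc]
  -- assemble
  rw [hα]
  have hM2 : 0 ≤ M / 2 := by linarith
  have step1 : (M / 2) * (∫ x in Set.Ioi (0:ℝ),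
        Real.exp ((1/2) * ∫ y in (0:ℝ)..x, M + κ y * y))
      ≤ (M / 2) * ((∫ x in Set.Ioc (0:ℝ) R, g x) + ∫ x in Set.Ioi R, g x) := by
    apply mul_le_mul_of_nonneg_left _ hM2
    rw [← hsplit]; exact hmain
  refine step1.trans ?_
  have hmaxpos : (0:ℝ) < max 4 (L * R ^ 2 + 2 * M * R) := lt_max_of_lt_left (by norm_num)
  have hsqrtKpos : 0 < Real.sqrt K := Real.sqrt_pos.mpr hK
  have hA : Real.sqrt Real.pi / Real.sqrt K ≤
      Real.pi ^ ((1:ℝ)/2) * Real.exp ((1:ℝ)/2) * K ^ (-(1:ℝ)/2) := by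
    rw [show (-(1:ℝ))/2 = -(1/2 : ℝ) by norm_num, Real.rpow_neg hK.le, ← Real.sqrt_eq_rpow,
      ← Real.sqrt_eq_rpow, div_eq_mul_inv]
    have h1 : (1:ℝ) ≤ Real.exp ((1:ℝ)/2) := Real.one_le_exp (by norm_num)
    nlinarith [mul_nonneg (mul_nonneg (sub_nonneg.mpr h1) (Real.sqrt_nonneg Real.pi))
      (inv_nonneg.mpr hsqrtKpos.le)]
  calc (M / 2) * ((∫ x in Set.Ioc (0:ℝ) R, g x) + ∫ x in Set.Ioi R, g x)
      ≤ (M / 2) * ((4 * R * Real.exp E / max 4 (L * R ^ 2 + 2 * M * R)) +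
          Real.exp E * (2 * Real.sqrt Real.pi / Real.sqrt K)) := by
        exact mul_le_mul_of_nonneg_left (add_le_add hI1 hI2) hM2
    _ = (Real.sqrt Real.pi / Real.sqrt K) * M * Real.exp E +
        (2 * R / max 4 (L * R ^ 2 + 2 * M * R)) * M * Real.exp E := by
        ring
    _ ≤ (Real.pi ^ ((1:ℝ)/2) * Real.exp ((1:ℝ)/2) * K ^ (-(1:ℝ)/2)) * M * Real.exp E +
        (2 * R / max 4 (L * R ^ 2 + 2 * M * R)) * M * Real.exp E := by
        have := mul_le_mul_of_nonneg_right
          (mul_le_mul_of_nonneg_right hA hM) (Real.exp_pos E).le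
        linarith
    _ = (Real.pi ^ ((1:ℝ)/2) * Real.exp ((1:ℝ)/2) * K ^ (-(1:ℝ)/2) +
          2 * R / max 4 (L * R ^ 2 + 2 * M * R)) * M * Real.exp E := by ring
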